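/- Let P be an orthogonal projection matrix onto a subspace W of ℝ^{2n} and J an orthogonal skew-symmetric matrix with J² = -Id. Then [P, [P, [J, [P, J]]]] = 0 implies W = (W ∩ W^ω) ⊕ (W ∩ JW), i.e., every critical point of the energy function f(P) = ½ Tr([P,J]²) on the Grassmannian is a J-compatible subspace. Conversely, if W = (W ∩ W^ω) ⊕ (W ∩ JW) is an orthogonal direct sum, then [P, [P, [J, [P, J]]]] = 0. -/

import Mathlib

open RealInnerProductSpace

/-- The symplectic complement with respect to the form `ω u v = ⟪u, J v⟫`. -/
def sympComplE {E : Type*} [NormedAddCommGroup E] [InnerProductSpace ℝ E]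
    (J : E →ₗ[ℝ] E) (W : Submodule ℝ E) : Submodule ℝ E where
  carrier := {v | ∀ w ∈ W, ⟪v, J w⟫ = 0}
  add_mem' := by
    intro a b ha hb w hw
    simp only [Set.mem_setOf_eq] at ha hb
    simp [inner_add_left, ha w hw, hb w hw]
  zero_mem' := by intro w hw; simp
  smul_mem' := by
    intro c a ha w hw
    simp only [Set.mem_setOf_eq] at ha
    simp [real_inner_smul_left, ha w hw]

/-- The commutator of endomorphisms. -/
def ecomm {E : Type*} [AddCommGroup E] [Module ℝ E] (A B : Module.End ℝ E) :
    Module.End ℝ E := A * B - B * A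

lemma mem_sympComplE {E : Type*} [NormedAddCommGroup E] [InnerProductSpace ℝ E]
    (J : E →ₗ[ℝ] E) (W : Submodule ℝ E) (v : E) :
    v ∈ sympComplE J W ↔ ∀ w ∈ W, ⟪v, J w⟫ = 0 := Iff.rfl

/-- Uniqueness of the orthogonal projection characterization. -/
lemma proj_unique' {E : Type*} [NormedAddCommGroup E] [InnerProductSpace ℝ E]
    (S : Submodule ℝ E) (x m₁ m₂ : E) (h₁ : m₁ ∈ S) (h₂ : m₂ ∈ S)
    (o₁ : ∀ z ∈ S, ⟪x - m₁, z⟫ = 0) (o₂ : ∀ z ∈ S, ⟪x - m₂, z⟫ = 0) : m₁ = m₂ := by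
  have hd : m₁ - m₂ ∈ S := S.sub_mem h₁ h₂
  have key : ⟪m₁ - m₂, m₁ - m₂⟫ = 0 := by
    have e1 := o₁ _ hd
    have e2 := o₂ _ hd
    have h3 : (x - m₂) - (x - m₁) = m₁ - m₂ := by abel
    have : ⟪(x - m₂) - (x - m₁), m₁ - m₂⟫ = 0 := by
      rw [inner_sub_left, e1, e2, sub_zero]
    rwa [h3] at this
  exact sub_eq_zero.mp (inner_self_eq_zero.mp key)

/-- For the orthogonal projection `P` onto `W ⊆ ℝ^{2n}` and an orthogonal
skew-symmetric complex structure `J`, vanishing of `[P,[P,[J,[P,J]]]]` (the gradient of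
`f(P) = ½Tr([P,J]²)`) implies `W = (W ∩ W^ω) ⊕ (W ∩ JW)`; conversely, if
`W = (W ∩ W^ω) ⊕ (W ∩ JW)` is an orthogonal direct sum then the gradient vanishes. -/
theorem critical_iff_J_compatible {E : Type*} [NormedAddCommGroup E]
    [InnerProductSpace ℝ E] [FiniteDimensional ℝ E]
    (n : ℕ) (hdim : Module.finrank ℝ E = 2 * n)
    (J : Module.End ℝ E)
    (hJ2 : ∀ v, J (J v) = -v)
    (hJskew : ∀ u v, ⟪J u, v⟫ = -⟪u, J v⟫)
    (W : Submodule ℝ E) (P : Module.End ℝ E)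
    (hP : ∀ v, P v = (W.orthogonalProjection v : E)) :
    (ecomm P (ecomm P (ecomm J (ecomm P J))) = 0 →
      W = (W ⊓ sympComplE J W) ⊔ (W ⊓ Submodule.map (J : E →ₗ[ℝ] E) W)) ∧
    ((W = (W ⊓ sympComplE J W) ⊔ (W ⊓ Submodule.map (J : E →ₗ[ℝ] E) W) ∧
        ∀ u ∈ W ⊓ sympComplE J W, ∀ v ∈ W ⊓ Submodule.map (J : E →ₗ[ℝ] E) W,
          ⟪u, v⟫ = 0) →
      ecomm P (ecomm P (ecomm J (ecomm P J))) = 0) := by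
  set Wj : Submodule ℝ E := Submodule.map (J : E →ₗ[ℝ] E) W with hWj
  -- basic facts about P
  have hPmem : ∀ v, P v ∈ W := fun v => by rw [hP]; exact (W.orthogonalProjection v).2
  have hPo : ∀ v, ∀ w ∈ W, ⟪v - P v, w⟫ = 0 := fun v w hw => by
    rw [hP, ← Submodule.starProjection_apply]; exact W.starProjection_inner_eq_zero v w hw
  have hPidW : ∀ w ∈ W, P w = w := fun w hw =>
    proj_unique' W w (P w) w (hPmem w) hw (hPo w) (fun z hz => by simp)
  have hPP : ∀ v, P (P v) = P v := fun v => hPidW (P v) (hPmem v)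
  have hPzero : ∀ x, (∀ w ∈ W, ⟪x, w⟫ = 0) → P x = 0 := fun x hx =>
    proj_unique' W x (P x) 0 (hPmem x) W.zero_mem (hPo x)
      (fun z hz => by simpa using hx z hz)
  have hPinner : ∀ x, ∀ w ∈ W, ⟪P x, w⟫ = ⟪x, w⟫ := fun x w hw => by
    have := hPo x w hw
    rw [inner_sub_left] at this
    linarith
  -- the projection onto J W
  set P' : Module.End ℝ E := -(J * P * J) with hP'def
  have hP'app : ∀ x, P' x = -(J (P (J x))) := fun x => by
    simp [hP'def, Module.End.mul_apply]
  have hP'mem : ∀ v, P' v ∈ Wj := fun v => by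
    rw [hP'app]
    have : -(J (P (J v))) = J (-(P (J v))) := by rw [map_neg]
    rw [this]
    exact Submodule.mem_map_of_mem (W.neg_mem (hPmem (J v)))
  have hP'o : ∀ v, ∀ z ∈ Wj, ⟪v - P' v, z⟫ = 0 := by
    intro v z hz
    obtain ⟨w, hw, rfl⟩ := hz
    rw [hP'app, sub_neg_eq_add, inner_add_left]
    have h1 : ⟪J (P (J v)), J w⟫ = ⟪P (J v), w⟫ := by
      rw [hJskew, hJ2, inner_neg_right, neg_neg]
    have h2 : ⟪P (J v), w⟫ = ⟪J v, w⟫ := by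
      have := hPo (J v) w hw
      rw [inner_sub_left] at this
      linarith
    have h3 : ⟪v, J w⟫ = -⟪J v, w⟫ := by rw [hJskew]; ring_nf
    rw [h1, h2]
    have : (J w : E) = J w := rfl
    rw [show ⟪v, (J : Module.End ℝ E) w⟫ = ⟪v, J w⟫ from rfl, h3]
    ring
  have hP'idWj : ∀ z ∈ Wj, P' z = z := fun z hz =>
    proj_unique' Wj z (P' z) z (hP'mem z) hz (hP'o z) (fun y hy => by simp)
  have hP'zero : ∀ x, (∀ z ∈ Wj, ⟪x, z⟫ = 0) → P' x = 0 := fun x hx =>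
    proj_unique' Wj x (P' x) 0 (hP'mem x) Wj.zero_mem (hP'o x)
      (fun z hz => by simpa using hx z hz)
  have hP'inner : ∀ x, ∀ z ∈ Wj, ⟪P' x, z⟫ = ⟪x, z⟫ := fun x z hz => by
    have := hP'o x z hz
    rw [inner_sub_left] at this
    linarith
  -- the gradient formula
  have hT : ∀ x, ecomm J (ecomm P J) x = (2:ℝ) • (P x - P' x) := by
    intro x
    simp only [ecomm, LinearMap.sub_apply, Module.End.mul_apply, map_sub, hJ2, map_neg,
      hP'app]
    module
  have hU : ∀ x, ecomm P (ecomm J (ecomm P J)) x = (2:ℝ) • (P' (P x) - P (P' x)) := by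
    intro x
    rw [show ecomm P (ecomm J (ecomm P J)) x
          = P ((ecomm J (ecomm P J)) x) - (ecomm J (ecomm P J)) (P x) from rfl,
      hT x, hT (P x)]
    simp only [map_smul, map_sub, hPP]
    module
  have hG : ∀ x, ecomm P (ecomm P (ecomm J (ecomm P J))) x
      = (2:ℝ) • ((2:ℝ) • P (P' (P x)) - P (P' x) - P' (P x)) := by
    intro x
    rw [show ecomm P (ecomm P (ecomm J (ecomm P J))) x
          = P ((ecomm P (ecomm J (ecomm P J))) x) - (ecomm P (ecomm J (ecomm P J))) (P x)
          from rfl,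
      hU x, hU (P x)]
    simp only [map_smul, map_sub, hPP]
    module
  constructor
  · -- forward direction
    intro hcrit
    have key : ∀ x, (2:ℝ) • P (P' (P x)) = P (P' x) + P' (P x) := by
      intro x
      have h0 : ecomm P (ecomm P (ecomm J (ecomm P J))) x = 0 := by rw [hcrit]; rfl
      rw [hG x] at h0
      have h1 : (2:ℝ) • P (P' (P x)) - P (P' x) - P' (P x) = 0 := by
        have h2 : (2:ℝ) ≠ 0 := two_ne_zero
        exact (smul_eq_zero.mp h0).resolve_left h2
      linear_combination (norm := module) h1
    have comm : ∀ x, P (P' x) = P' (P x) := by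
      intro x
      have hA : P (P' (P x)) = P (P' x) := by
        have h2 := congrArg P (key x)
        simp only [map_smul, map_add, hPP] at h2
        rw [two_smul] at h2
        exact add_right_cancel h2
      have hB : P (P' (P x)) = P' (P x) := by
        have h2 := key (P x)
        rw [hPP x] at h2
        rw [two_smul] at h2
        exact add_left_cancel h2
      rw [← hA, hB]
    apply le_antisymm
    · intro w hw
      have hPw : P w = w := hPidW w hw
      have h1 : P' w ∈ W ⊓ Wj := by
        constructor
        · have : P' w = P (P' w) := by rw [comm w, hPw]
          rw [this]; exact hPmem _
        · exact hP'mem w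
      have h2 : w - P' w ∈ W ⊓ sympComplE J W := by
        constructor
        · exact W.sub_mem hw h1.1
        · intro w' hw'
          exact hP'o w (J w') (Submodule.mem_map_of_mem hw')
      have : (w - P' w) + P' w ∈ (W ⊓ sympComplE J W) ⊔ (W ⊓ Wj) :=
        Submodule.add_mem_sup h2 h1
      simpa using this
    · exact sup_le inf_le_left inf_le_left
  · -- converse direction
    rintro ⟨hdec, -⟩
    have step1 : ∀ x, P' (P x) ∈ W ⊓ Wj := by
      intro x
      have hPx : P x ∈ (W ⊓ sympComplE J W) ⊔ (W ⊓ Wj) := hdec ▸ hPmem x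
      obtain ⟨u, hu, s, hs, huv⟩ := Submodule.mem_sup.mp hPx
      have hP'u : P' u = 0 := hP'zero u (by
        rintro z ⟨w, hw, rfl⟩
        exact hu.2 w hw)
      have hP's : P' s = s := hP'idWj s hs.2
      have : P' (P x) = s := by rw [← huv, map_add, hP'u, hP's, zero_add]
      rw [this]; exact hs
    have step2 : ∀ x, P (P' x) ∈ W ⊓ Wj := by
      intro x
      obtain ⟨w, hw, hJw⟩ := hP'mem x
      have hw' : w ∈ (W ⊓ sympComplE J W) ⊔ (W ⊓ Wj) := hdec ▸ hw
      obtain ⟨u, hu, s, hs, huv⟩ := Submodule.mem_sup.mp hw'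
      have hJu : P (J u) = 0 := hPzero (J u) (by
        intro w' hw'
        rw [hJskew, hu.2 w' hw', neg_zero])
      have hJsW : J s ∈ W := by
        obtain ⟨t, ht, hts⟩ := hs.2
        have : J s = -t := by
          rw [show (J : E →ₗ[ℝ] E) t = J t from rfl] at hts
          rw [← hts, hJ2]
        rw [this]; exact W.neg_mem ht
      have hJs : P (J s) = J s := hPidW (J s) hJsW
      have hPP'x : P (P' x) = J s := by
        rw [← hJw, show (J : E →ₗ[ℝ] E) w = J w from rfl, ← huv, map_add, map_add,
          hJu, hJs, zero_add]
      rw [hPP'x]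
      exact ⟨hJsW, Submodule.mem_map_of_mem hs.1⟩
    have comm : ∀ x, P (P' x) = P' (P x) := by
      intro x
      have hdmem : P (P' x) - P' (P x) ∈ W ⊓ Wj := Submodule.sub_mem _ (step2 x) (step1 x)
      have hzero : ∀ t ∈ W ⊓ Wj, ⟪P (P' x) - P' (P x), t⟫ = 0 := by
        intro t ht
        have e1 : ⟪P (P' x), t⟫ = ⟪x, t⟫ := by
          rw [hPinner _ t ht.1, hP'inner _ t ht.2]
        have e2 : ⟪P' (P x), t⟫ = ⟪x, t⟫ := by
          rw [hP'inner _ t ht.2, hPinner _ t ht.1]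
        rw [inner_sub_left, e1, e2, sub_self]
      have := hzero _ hdmem
      rw [inner_self_eq_zero] at this
      exact sub_eq_zero.mp this
    apply LinearMap.ext
    intro x
    rw [hG x, LinearMap.zero_apply]
    have h1 : P (P' (P x)) = P' (P x) := by
      rw [comm (P x), hPP]
    have h2 : P (P' x) = P' (P x) := comm x
    rw [h1, h2]
    module
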